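/- arXiv:math/0602463 — 14 statements merged into one kernel-verified Lean document; each statement's English description precedes it below -/
import Mathlib

section
/- Let A be a general metric space, F a filter on A and N a right module on A. Then ⨆_{s ∈ F} ⨅_{y ∈ s} N y ≤ ⨅_{x ∈ A} (M⁻(F)(x) + N x). Moreover, if F is proper and has type 1, then ⨅_{x ∈ A} (M⁻(F)(x) + N x) = ⨆_{s ∈ F} ⨅_{y ∈ s} N y. -/
open ENNReal Filter

/-- `M⁻(F)(x) = ⨆ s ∈ F, ⨅ y ∈ s, d x y`. -/
noncomputable def Mminus {A : Type*} (d : A → A → ℝ≥0∞) (F : Filter A) (x : A) : ℝ≥0∞ :=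
  ⨆ s ∈ F, ⨅ y ∈ s, d x y

/-- A proper filter `F` has type 1 when `⨅ s ∈ F, ⨆ x ∈ s, M⁻(F)(x) = 0`. -/
def HasType1 {A : Type*} (d : A → A → ℝ≥0∞) (F : Filter A) : Prop :=
  F.NeBot ∧ (⨅ s ∈ F, ⨆ x ∈ s, Mminus d F x) = 0

/-- For any filter `F` and right module `N`,
`lim⁻_F N ≤ N * M⁻(F)`, with equality when `F` is a proper filter of type 1. -/
theorem colimit_Mminus {A : Type*} (d : A → A → ℝ≥0∞)
    (hrefl : ∀ x, d x x = 0)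
    (htri : ∀ x y z, d x z ≤ d y z + d x y)
    (F : Filter A) (N : A → ℝ≥0∞)
    (hN : ∀ x y, N y ≤ d x y + N x) :
    (⨆ s ∈ F, ⨅ y ∈ s, N y) ≤ (⨅ x, (Mminus d F x + N x)) ∧
    (HasType1 d F → (⨅ x, (Mminus d F x + N x)) = ⨆ s ∈ F, ⨅ y ∈ s, N y) := by
  set L := ⨆ s ∈ F, ⨅ y ∈ s, N y with hL
  have h1 : L ≤ ⨅ x, (Mminus d F x + N x) := by
    refine le_iInf fun x => ?_
    refine iSup₂_le fun s hs => ?_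
    have : (⨅ y ∈ s, N y) ≤ (⨅ y ∈ s, d x y) + N x := by
      rcases s.eq_empty_or_nonempty with rfl | ⟨y, hy⟩
      · simp
      · haveI : Nonempty s := ⟨⟨y, hy⟩⟩
        calc (⨅ y ∈ s, N y) = ⨅ y : s, N y := by rw [iInf_subtype']
          _ ≤ (⨅ y : s, d x y) + N x := by
              rw [ENNReal.iInf_add]
              exact iInf_mono fun z => hN x z
          _ = (⨅ y ∈ s, d x y) + N x := by rw [iInf_subtype']
    refine this.trans (add_le_add ?_ le_rfl)
    exact le_iSup₂ (f := fun s (_ : s ∈ F) => ⨅ y ∈ s, d x y) s hs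
  refine ⟨h1, fun ⟨hne, h0⟩ => le_antisymm ?_ h1⟩
  refine ENNReal.le_of_forall_pos_le_add fun ε hε hLt => ?_
  have hε2 : (0 : ℝ≥0∞) < (ε : ℝ≥0∞) / 2 := by
    simp [ENNReal.div_pos_iff, hε.ne']
  -- find s ∈ F with sup of Mminus over s < ε/2
  have h0' : (⨅ s ∈ F, ⨆ x ∈ s, Mminus d F x) < (ε : ℝ≥0∞) / 2 := by
    rw [h0]; exact hε2
  obtain ⟨s, hs, hsup⟩ : ∃ s ∈ F, (⨆ x ∈ s, Mminus d F x) < (ε : ℝ≥0∞) / 2 := by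
    obtain ⟨s, hsl⟩ := iInf_lt_iff.mp h0'
    obtain ⟨hs, hsl⟩ := iInf_lt_iff.mp hsl
    exact ⟨s, hs, hsl⟩
  -- find y ∈ s with N y < L + ε/2
  have hinf : (⨅ y ∈ s, N y) < L + (ε : ℝ≥0∞) / 2 := by
    have h1' : (⨅ y ∈ s, N y) ≤ L :=
      le_iSup₂ (f := fun s (_ : s ∈ F) => ⨅ y ∈ s, N y) s hs
    exact h1'.trans_lt (ENNReal.lt_add_right hLt.ne hε2.ne')
  obtain ⟨y, hy, hNy⟩ : ∃ y ∈ s, N y < L + (ε : ℝ≥0∞) / 2 := by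
    obtain ⟨y, hyl⟩ := iInf_lt_iff.mp hinf
    obtain ⟨hy, hyl⟩ := iInf_lt_iff.mp hyl
    exact ⟨y, hy, hyl⟩
  have hMy : Mminus d F y < (ε : ℝ≥0∞) / 2 :=
    (le_iSup₂ (f := fun x (_ : x ∈ s) => Mminus d F x) y hy).trans_lt hsup
  calc (⨅ x, (Mminus d F x + N x)) ≤ Mminus d F y + N y := iInf_le _ y
    _ ≤ (ε : ℝ≥0∞) / 2 + (L + (ε : ℝ≥0∞) / 2) := add_le_add hMy.le hNy.le
    _ = L + ((ε : ℝ≥0∞) / 2 + (ε : ℝ≥0∞) / 2) := by ring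
    _ = L + ε := by rw [ENNReal.add_halves]
end

section
/- Let A be a general metric space and F a proper filter of type 1 on A. Then M⁻(F) preserves cotensors: for every v ∈ ℝ≥0∞ and every right module N on A, ⨅_{x ∈ A} (M⁻(F)(x) + (N x - v)) = (⨅_{x ∈ A} (M⁻(F)(x) + N x)) - v, where subtraction is truncated subtraction on ℝ≥0∞. -/
open ENNReal Filter

/-- If `F` is a proper filter of type 1 then `- * M⁻(F)` preserves cotensors. -/
theorem Mminus_preserves_cotensors {A : Type*} (d : A → A → ℝ≥0∞)
    (hrefl : ∀ x, d x x = 0)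
    (htri : ∀ x y z, d x z ≤ d y z + d x y)
    (F : Filter A) (hF : HasType1 d F)
    (v : ℝ≥0∞) (N : A → ℝ≥0∞)
    (hN : ∀ x y, N y ≤ d x y + N x) :
    (⨅ x, (Mminus d F x + (N x - v))) = (⨅ x, (Mminus d F x + N x)) - v := by
  obtain ⟨hne, h1⟩ := hF
  set M := Mminus d F with hM
  refine le_antisymm ?_ (le_iInf fun x => ?_)
  · set I := ⨅ x, M x + N x with hI
    refine ENNReal.le_of_forall_pos_le_add fun ε hε _ => ?_
    have hε' : (0 : ℝ≥0∞) < ε / 3 := by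
      simp [ENNReal.div_pos_iff]
      exact_mod_cast hε.ne'
    have hεfin : (ε : ℝ≥0∞) / 3 ≠ ∞ := by
      simp [ENNReal.div_eq_top]
    obtain ⟨s, hsF, hs⟩ : ∃ s ∈ F, (⨆ y ∈ s, M y) < ε / 3 := by
      have : (⨅ s ∈ F, ⨆ y ∈ s, M y) < ε / 3 := by rw [h1]; exact hε'
      simpa [iInf_lt_iff] using this
    have hMy : ∀ y ∈ s, M y ≤ ε / 3 := fun y hy =>
      le_of_lt (lt_of_le_of_lt (le_iSup₂ (f := fun y _ => M y) y hy) hs)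
    by_cases hItop : I = ∞
    · -- all M x + N x = ∞
      have hall : ∀ x, M x + N x = ∞ := by
        intro x
        have := iInf_eq_top.mp hItop x
        exact this
      obtain ⟨y, hy⟩ := hne.nonempty_of_mem hsF
      have hMyfin : M y ≠ ∞ := fun h => by
        have := hMy y hy; rw [h] at this; exact absurd (le_antisymm le_top this) (by simpa using hεfin)
      have hNy : N y = ∞ := by
        rcases ENNReal.add_eq_top.mp (hall y) with h | h
        · exact absurd h hMyfin
        · exact h
      have hvI : I - v + (ε : ℝ≥0∞) ≥ ε / 3 :=
        le_add_left (ENNReal.div_le_of_le_mul (by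
          calc (ε : ℝ≥0∞) ≤ ε * 3 := le_mul_of_one_le_right (by simp) (by norm_num)))
      calc (⨅ x, M x + (N x - v)) ≤ M y + (N y - v) := iInf_le _ y
        _ ≤ ε / 3 + (N y - v) := add_le_add_left (hMy y hy) _
        _ ≤ I - v + ε := by
            rcases eq_or_ne v ∞ with rfl | hv
            · rw [hNy]; simp only [tsub_self, add_zero]
              exact hvI
            · have : I - v = ∞ := by rw [hItop]; exact ENNReal.top_sub hv -- maybe wrong name
              rw [this]; exact le_top
    · -- I finite: pick x near the infimum
      obtain ⟨x, hx⟩ : ∃ x, M x + N x < I + ε / 3 := by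
        have : I < I + ε / 3 := ENNReal.lt_add_right hItop hε'.ne'
        simpa [hI, iInf_lt_iff] using lt_of_le_of_lt (le_refl I) this
      have hMx : M x ≠ ∞ := fun h => hItop (top_le_iff.mp (by
        have := hx; rw [h] at this; exact absurd this (by simp)))
      have hinf : (⨅ y ∈ s, d x y) ≤ M x := le_iSup₂ (f := fun s _ => ⨅ y ∈ s, d x y) s hsF
      obtain ⟨y, hy, hdxy⟩ : ∃ y ∈ s, d x y < M x + ε / 3 := by
        have : (⨅ y ∈ s, d x y) < M x + ε / 3 :=
          lt_of_le_of_lt hinf (ENNReal.lt_add_right hMx hε'.ne')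
        simpa [iInf_lt_iff] using this
      calc (⨅ x, M x + (N x - v)) ≤ M y + (N y - v) := iInf_le _ y
        _ ≤ ε / 3 + (d x y + N x - v) :=
            add_le_add (hMy y hy) (tsub_le_tsub_right (hN x y) v)
        _ ≤ ε / 3 + ((M x + ε / 3) + N x - v) :=
            add_le_add_right (tsub_le_tsub_right (add_le_add_left hdxy.le _) v) _
        _ = ε / 3 + ((M x + N x) + ε / 3 - v) := by ring_nf
        _ ≤ ε / 3 + (((M x + N x) - v) + ε / 3) := add_le_add_right add_tsub_le_tsub_add _
        _ ≤ ε / 3 + (((I + ε / 3) - v) + ε / 3) :=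
            add_le_add_right (add_le_add_left (tsub_le_tsub_right hx.le v) _) _
        _ ≤ ε / 3 + (((I - v) + ε / 3) + ε / 3) :=
            add_le_add_right (add_le_add_left add_tsub_le_tsub_add _) _
        _ ≤ (I - v) + ε := by
            rw [add_comm]
            have : (ε : ℝ≥0∞) / 3 + ε / 3 + ε / 3 ≤ ε := by
              rw [ENNReal.div_add_div_same, ENNReal.div_add_div_same]
              exact ENNReal.div_le_of_le_mul (le_of_eq (by ring))
            calc I - v + ε/3 + ε/3 + ε/3 = I - v + (ε/3 + ε/3 + ε/3) := by ring
              _ ≤ I - v + ε := add_le_add_right this _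
  · calc (⨅ x, M x + N x) - v ≤ (M x + N x) - v := tsub_le_tsub_right (iInf_le _ x) v
      _ ≤ M x + (N x - v) := add_tsub_le_assoc
end

section
/- Let A be a general metric space and M a left module on A such that for every v ∈ ℝ≥0∞ and every right module N on A one has ⨅_{x ∈ A} (M x + (N x - v)) = (⨅_{x ∈ A} (M x + N x)) - v (truncated subtraction). Then for every x ∈ A, ⨆_{ε > 0} ⨅_{y ∈ {y | M y ≤ ε}} d x y ≤ M x. -/
open ENNReal Filter

/-- For any left module `M` on a general metric space `(A, d)` such that `- * M`
preserves cotensors, one has `⨆ ε > 0, ⨅ y ∈ {y | M y ≤ ε}, d x y ≤ M x`. -/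
theorem sup_inf_le_of_preserves_cotensors {A : Type*} (d : A → A → ℝ≥0∞)
    (hrefl : ∀ x, d x x = 0)
    (htri : ∀ x y z, d x z ≤ d y z + d x y)
    (M : A → ℝ≥0∞) (hM : ∀ x y, M x ≤ M y + d x y)
    (hcot : ∀ (v : ℝ≥0∞) (N : A → ℝ≥0∞), (∀ x y, N y ≤ d x y + N x) →
      (⨅ x, (M x + (N x - v))) = (⨅ x, (M x + N x)) - v) :
    ∀ x, (⨆ ε > (0 : ℝ≥0∞), ⨅ y ∈ {y | M y ≤ ε}, d x y) ≤ M x := by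
  intro x
  apply iSup₂_le
  intro ε hε
  have hN : ∀ z y, d x y ≤ d z y + d x z := fun z y => htri x z y
  have hinf : (⨅ y, (M y + d x y)) = M x := by
    apply le_antisymm
    · calc (⨅ y, (M y + d x y)) ≤ M x + d x x := iInf_le _ x
        _ = M x := by rw [hrefl, add_zero]
    · exact le_iInf fun y => hM x y
  refine ENNReal.le_of_forall_pos_le_add (fun η hη _ => ?_)
  have hη2 : (0 : ℝ≥0∞) < (η : ℝ≥0∞) / 2 := by
    apply ENNReal.div_pos
    · exact_mod_cast hη.ne'
    · exact ofNat_ne_top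
  set δ := min ((η : ℝ≥0∞) / 2) ε with hδdef
  have hδpos : 0 < δ := lt_min hη2 hε
  have hkey := hcot (M x + (η : ℝ≥0∞) / 2) (fun y => d x y) hN
  rw [hinf] at hkey
  have h0 : (⨅ y, (M y + (d x y - (M x + (η : ℝ≥0∞) / 2)))) = 0 := by
    rw [hkey]
    exact tsub_eq_zero_of_le le_self_add
  have hlt : (⨅ y, (M y + (d x y - (M x + (η : ℝ≥0∞) / 2)))) < δ := by
    rw [h0]; exact hδpos
  obtain ⟨y, hy⟩ := iInf_lt_iff.mp hlt
  have hMy : M y ≤ ε :=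
    le_trans (le_of_lt (lt_of_le_of_lt le_self_add hy)) (min_le_right _ _)
  have hdxy : d x y ≤ M x + (η : ℝ≥0∞) / 2 + δ := by
    have h1 : d x y - (M x + (η : ℝ≥0∞) / 2) < δ := lt_of_le_of_lt le_add_self hy
    calc d x y ≤ d x y - (M x + (η : ℝ≥0∞) / 2) + (M x + (η : ℝ≥0∞) / 2) :=
          le_tsub_add
      _ ≤ δ + (M x + (η : ℝ≥0∞) / 2) := add_le_add_left h1.le _
      _ = M x + (η : ℝ≥0∞) / 2 + δ := add_comm _ _
  calc (⨅ y ∈ {y | M y ≤ ε}, d x y) ≤ d x y := iInf₂_le y hMy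
    _ ≤ M x + (η : ℝ≥0∞) / 2 + δ := hdxy
    _ ≤ M x + (η : ℝ≥0∞) / 2 + (η : ℝ≥0∞) / 2 :=
        add_le_add_right (min_le_left _ _) _
    _ = M x + η := by rw [add_assoc, ENNReal.add_halves]
end

section
/- Let A be a general metric space and M a P1-flat left module on A. Then: (a) for every x ∈ A, M x = ⨆_{ε > 0} ⨅_{y ∈ {y | M y ≤ ε}} d x y; and (b) the filter F(M) on A generated by the sets {y ∈ A | M y ≤ ε} for ε > 0 is a proper filter of type 1, and M⁻(F(M)) = M. -/
open ENNReal Filter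

/-- A left module `M` is `𝒫₁`-flat if `- * M` preserves the terminal object and
cotensors. -/
def IsP1Flat {A : Type*} (d : A → A → ℝ≥0∞) (M : A → ℝ≥0∞) : Prop :=
  (⨅ x, M x) = 0 ∧
  ∀ (v : ℝ≥0∞) (N : A → ℝ≥0∞), (∀ x y, N y ≤ d x y + N x) →
    (⨅ x, (M x + (N x - v))) = (⨅ x, (M x + N x)) - v

/-- The filter `F(M)` generated by the sets `{y | M y ≤ ε}` for `ε > 0`. -/
noncomputable def filterOf {A : Type*} (M : A → ℝ≥0∞) : Filter A :=
  ⨅ (ε : ℝ≥0∞) (_ : 0 < ε), Filter.principal {y | M y ≤ ε}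

/-- If `M` is a `𝒫₁`-flat left module on `A`, then `M x = ⨆ ε > 0, ⨅ y ∈ {y | M y ≤ ε}, d x y`,
the filter `F(M)` is a proper filter of type 1, and `M⁻(F(M)) = M`. -/
theorem p1Flat_corresponds_type1 {A : Type*} (d : A → A → ℝ≥0∞)
    (hrefl : ∀ x, d x x = 0)
    (htri : ∀ x y z, d x z ≤ d y z + d x y)
    (M : A → ℝ≥0∞) (hM : ∀ x y, M x ≤ M y + d x y)
    (hflat : IsP1Flat d M) :
    (∀ x, M x = ⨆ ε > (0 : ℝ≥0∞), ⨅ y ∈ {y | M y ≤ ε}, d x y) ∧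
    HasType1 d (filterOf M) ∧
    Mminus d (filterOf M) = M := by
  obtain ⟨hinf0, hcot⟩ := hflat
  -- `⨅ y, (M y + d x y) = M x`
  have hinfM : ∀ x, (⨅ y, (M y + d x y)) = M x := by
    intro x
    refine le_antisymm ?_ (le_iInf fun y => hM x y)
    calc (⨅ y, (M y + d x y)) ≤ M x + d x x := iInf_le _ x
    _ = M x := by rw [hrefl, add_zero]
  -- key : `⨅ y, (M y + (d x y - M x)) = 0`
  have hkey : ∀ x, (⨅ y, (M y + (d x y - M x))) = 0 := by
    intro x
    have := hcot (M x) (d x) (fun a b => htri x a b)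
    rw [this, hinfM, tsub_self]
  -- upper bound: for every ε > 0, `⨅ y ∈ {M ≤ ε}, d x y ≤ M x`
  have hub : ∀ x (ε : ℝ≥0∞), 0 < ε → (⨅ y ∈ {y | M y ≤ ε}, d x y) ≤ M x := by
    intro x ε hε
    refine ENNReal.le_of_forall_pos_le_add fun δ hδ _ => ?_
    have hδ' : (0 : ℝ≥0∞) < min (δ : ℝ≥0∞) ε := lt_min (by exact_mod_cast hδ) hε
    have : (⨅ y, (M y + (d x y - M x))) < min (δ : ℝ≥0∞) ε := by
      rw [hkey x]; exact hδ'
    obtain ⟨y, hy⟩ := iInf_lt_iff.mp this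
    have h1 : M y < min (δ : ℝ≥0∞) ε := (le_add_right le_rfl).trans_lt hy
    have h2 : d x y - M x < min (δ : ℝ≥0∞) ε := (le_add_left le_rfl).trans_lt hy
    have hMy : M y ≤ ε := (h1.trans_le (min_le_right _ _)).le
    have hdxy : d x y ≤ M x + δ := by
      calc d x y ≤ (d x y - M x) + M x := le_tsub_add
      _ ≤ (δ : ℝ≥0∞) + M x := add_le_add (h2.trans_le (min_le_left _ _)).le le_rfl
      _ = M x + δ := add_comm _ _
    exact (iInf₂_le y hMy).trans hdxy
  -- part (a)
  have ha : ∀ x, M x = ⨆ ε > (0 : ℝ≥0∞), ⨅ y ∈ {y | M y ≤ ε}, d x y := by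
    intro x
    refine le_antisymm ?_ (iSup₂_le fun ε hε => hub x ε hε)
    refine ENNReal.le_of_forall_pos_le_add fun δ hδ _ => ?_
    have hδ' : (0 : ℝ≥0∞) < δ := by exact_mod_cast hδ
    have hlow : M x - δ ≤ ⨅ y ∈ {y | M y ≤ (δ : ℝ≥0∞)}, d x y := by
      refine le_iInf₂ fun y hy => ?_
      refine tsub_le_iff_right.mpr ?_
      calc M x ≤ M y + d x y := hM x y
      _ ≤ (δ : ℝ≥0∞) + d x y := add_le_add hy le_rfl
      _ = d x y + δ := add_comm _ _
    calc M x ≤ (M x - δ) + δ := le_tsub_add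
    _ ≤ (⨆ ε > (0 : ℝ≥0∞), ⨅ y ∈ {y | M y ≤ ε}, d x y) + δ :=
      add_le_add (hlow.trans (le_iSup₂_of_le (δ : ℝ≥0∞) hδ' le_rfl)) le_rfl
  have hbasis : (filterOf M).HasBasis (fun ε : ℝ≥0∞ => 0 < ε) (fun ε => {y | M y ≤ ε}) := by
    refine hasBasis_biInf_principal' ?_ ⟨1, one_pos⟩
    intro i hi j hj
    refine ⟨min i j, lt_min hi hj, fun y hy => ?_, fun y hy => ?_⟩
    · exact le_trans (Set.mem_setOf_eq ▸ hy) (min_le_left _ _)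
    · exact le_trans (Set.mem_setOf_eq ▸ hy) (min_le_right _ _)
  have hne : (filterOf M).NeBot := by
    refine hbasis.neBot_iff.mpr fun {ε} hε => ?_
    obtain ⟨y, hy⟩ := iInf_lt_iff.mp (show (⨅ x, M x) < ε by rw [hinf0]; exact hε)
    exact ⟨y, hy.le⟩
  have hMm : Mminus d (filterOf M) = M := by
    funext x
    refine le_antisymm (iSup₂_le fun s hs => ?_) ?_
    · obtain ⟨ε, hε, hsub⟩ := hbasis.mem_iff.mp hs
      exact (biInf_mono hsub).trans (hub x ε hε)
    · refine (ha x).le.trans (iSup₂_le fun ε hε => ?_)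
      exact le_iSup₂_of_le {y | M y ≤ ε} (hbasis.mem_of_mem hε) le_rfl
  refine ⟨ha, ⟨hne, ?_⟩, hMm⟩
  simp only [hMm]
  refine le_antisymm ?_ zero_le
  refine ENNReal.le_of_forall_pos_le_add fun δ hδ _ => ?_
  have hδ' : (0 : ℝ≥0∞) < δ := by exact_mod_cast hδ
  calc (⨅ s ∈ filterOf M, ⨆ x ∈ s, M x)
      ≤ ⨆ x ∈ {y | M y ≤ (δ : ℝ≥0∞)}, M x := iInf₂_le _ (hbasis.mem_of_mem hδ')
  _ ≤ (δ : ℝ≥0∞) := iSup₂_le fun y hy => hy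
  _ = 0 + δ := (zero_add _).symm
end

section
/- Let A be a general metric space, M a left module on A and F a filter on A. Then ⨆_{x ∈ A} (M x - M⁻(F)(x)) ≤ ⨅_{s ∈ F} ⨆_{z ∈ s} M z (truncated subtraction). Moreover, if F is proper and has type 1, then ⨆_{x ∈ A} (M x - M⁻(F)(x)) = ⨅_{s ∈ F} ⨆_{z ∈ s} M z. -/
open ENNReal Filter

/-- For any left module `M` and any filter `F`, the presheaf distance from `M⁻(F)`
to `M` is at most `lim⁺_F M`, with equality when `F` is a proper filter of type 1. -/
theorem presheafDist_Mminus {A : Type*} (d : A → A → ℝ≥0∞)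
    (hrefl : ∀ x, d x x = 0)
    (htri : ∀ x y z, d x z ≤ d y z + d x y)
    (M : A → ℝ≥0∞) (hM : ∀ x y, M x ≤ M y + d x y)
    (F : Filter A) :
    (⨆ x, (M x - Mminus d F x)) ≤ (⨅ s ∈ F, ⨆ z ∈ s, M z) ∧
    (HasType1 d F → (⨆ x, (M x - Mminus d F x)) = ⨅ s ∈ F, ⨆ z ∈ s, M z) := by
  have h1 : (⨆ x, (M x - Mminus d F x)) ≤ (⨅ s ∈ F, ⨆ z ∈ s, M z) := by
    refine iSup_le fun x => le_iInf₂ fun s hs => ?_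
    rw [tsub_le_iff_right]
    have key : M x ≤ (⨆ z ∈ s, M z) + ⨅ y ∈ s, d x y := by
      simp_rw [ENNReal.add_iInf]
      refine le_iInf₂ fun y hy => ?_
      exact (hM x y).trans (add_le_add_left (le_iSup₂ (f := fun z _ => M z) y hy) _)
    refine key.trans (add_le_add_right ?_ _)
    exact le_iSup₂ (f := fun s _ => ⨅ y ∈ s, d x y) s hs
  refine ⟨h1, fun ⟨hne, h0⟩ => le_antisymm h1 ?_⟩
  set S := ⨆ x, (M x - Mminus d F x) with hS
  refine ENNReal.le_of_forall_pos_le_add fun ε hε hSlt => ?_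
  have hε' : (0 : ℝ≥0∞) < ε := by exact_mod_cast hε
  obtain ⟨s, hs, hsε⟩ : ∃ s ∈ F, (⨆ x ∈ s, Mminus d F x) < ε := by
    have hlt : (⨅ s ∈ F, ⨆ x ∈ s, Mminus d F x) < ε := h0 ▸ hε'
    obtain ⟨s, hs⟩ := iInf_lt_iff.mp hlt
    obtain ⟨hsF, hsε⟩ := iInf_lt_iff.mp hs
    exact ⟨s, hsF, hsε⟩
  have : ∀ z ∈ s, M z ≤ S + ε := by
    intro z hz
    calc M z ≤ (M z - Mminus d F z) + Mminus d F z := le_tsub_add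
    _ ≤ S + ε := add_le_add (le_iSup (fun x => M x - Mminus d F x) z)
        (((le_iSup₂ (f := fun x _ => Mminus d F x) z hz)).trans hsε.le)
  calc (⨅ s ∈ F, ⨆ z ∈ s, M z) ≤ ⨆ z ∈ s, M z := biInf_le _ hs
  _ ≤ S + ε := iSup₂_le this
end

section
/- Let A be a general metric space and F₁, F₂ two proper filters of type 1 on A. Then ⨆_{x ∈ A} (M⁻(F₂)(x) - M⁻(F₁)(x)) = ⨅_{s ∈ F₁} ⨆_{x ∈ s} ⨆_{t ∈ F₂} ⨅_{y ∈ t} d x y (truncated subtraction on the left). -/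
open ENNReal Filter

/-- For filters `F₁`, `F₂` of type 1, the presheaf distance from `M⁻(F₁)` to `M⁻(F₂)`
equals `lim⁺_{x ∈ F₁} lim⁻_{y ∈ F₂} d x y`. -/
theorem presheafDist_eq_limPlus_limMinus {A : Type*} (d : A → A → ℝ≥0∞)
    (hrefl : ∀ x, d x x = 0)
    (htri : ∀ x y z, d x z ≤ d y z + d x y)
    (F₁ F₂ : Filter A) (hF₁ : HasType1 d F₁) (hF₂ : HasType1 d F₂) :
    (⨆ x, (Mminus d F₂ x - Mminus d F₁ x)) =
      ⨅ s ∈ F₁, ⨆ x ∈ s, ⨆ t ∈ F₂, ⨅ y ∈ t, d x y := by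
  obtain ⟨hne, h1⟩ := hF₁
  have hRHS : (⨅ s ∈ F₁, ⨆ x ∈ s, ⨆ t ∈ F₂, ⨅ y ∈ t, d x y)
      = ⨅ s ∈ F₁, ⨆ x ∈ s, Mminus d F₂ x := rfl
  rw [hRHS]
  -- triangle: M₂ x ≤ M₂ z + d x z
  have key : ∀ x z, Mminus d F₂ x ≤ Mminus d F₂ z + d x z := by
    intro x z
    refine iSup₂_le fun t ht => ?_
    calc (⨅ y ∈ t, d x y) ≤ ⨅ y ∈ t, (d z y + d x z) :=
          iInf_mono fun y => iInf_mono fun _ => htri x z y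
      _ = (⨅ y ∈ t, d z y) + d x z := by
          rw [ENNReal.iInf_add]
          exact iInf_congr fun y => by rw [ENNReal.iInf_add]
      _ ≤ Mminus d F₂ z + d x z := add_le_add_left (le_iSup₂ (f := fun t _ => ⨅ y ∈ t, d z y) t ht) _
  refine le_antisymm ?_ ?_
  · refine iSup_le fun x => le_iInf₂ fun s hs => ?_
    rw [tsub_le_iff_right]
    have step : Mminus d F₂ x ≤ (⨆ z ∈ s, Mminus d F₂ z) + ⨅ z ∈ s, d x z := by
      rw [ENNReal.add_iInf]
      refine le_iInf fun z => ?_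
      rw [ENNReal.add_iInf]
      refine le_iInf fun hz => ?_
      exact (key x z).trans (add_le_add_left (le_iSup₂ (f := fun z _ => Mminus d F₂ z) z hz) _)
    exact step.trans (add_le_add_right (le_iSup₂ (f := fun t _ => ⨅ y ∈ t, d x y) s hs) _)
  · refine ENNReal.le_of_forall_pos_le_add fun ε hε _ => ?_
    have hlt : (⨅ s ∈ F₁, ⨆ x ∈ s, Mminus d F₁ x) < (ε : ℝ≥0∞) := by
      rw [h1]; exact_mod_cast hε
    obtain ⟨s, hs, hsε⟩ : ∃ s ∈ F₁, (⨆ x ∈ s, Mminus d F₁ x) < (ε : ℝ≥0∞) := by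
      simpa [iInf_lt_iff] using hlt
    calc (⨅ s ∈ F₁, ⨆ x ∈ s, Mminus d F₂ x) ≤ ⨆ x ∈ s, Mminus d F₂ x :=
          iInf₂_le s hs
      _ ≤ (⨆ x, (Mminus d F₂ x - Mminus d F₁ x)) + ε := by
          refine iSup₂_le fun x hx => ?_
          have h1x : Mminus d F₁ x ≤ (ε : ℝ≥0∞) :=
            ((le_iSup₂ (f := fun x _ => Mminus d F₁ x) x hx).trans hsε.le)
          calc Mminus d F₂ x ≤ (Mminus d F₂ x - Mminus d F₁ x) + Mminus d F₁ x :=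
                le_tsub_add
            _ ≤ (⨆ x, (Mminus d F₂ x - Mminus d F₁ x)) + ε :=
                add_le_add (le_iSup (fun x => Mminus d F₂ x - Mminus d F₁ x) x) h1x
end

section
/- Let A be a general metric space, F₁ a proper Cauchy filter on A and F₂ a proper filter of type 1 on A. Then ⨆_{x ∈ A} (M⁻(F₂)(x) - M⁻(F₁)(x)) = ⨆_{t ∈ F₂} ⨅_{y ∈ t} ⨅_{s ∈ F₁} ⨆_{x ∈ s} d x y; that is, the presheaf distance from M⁻(F₁) to M⁻(F₂) equals lim⁻_{y ∈ F₂} lim⁺_{x ∈ F₁} d x y. -/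
open ENNReal Filter

/-- A proper filter `F` is Cauchy when `⨅ s ∈ F, ⨆ x ∈ s, ⨆ y ∈ s, d x y = 0`. -/
def IsCauchyFilter {A : Type*} (d : A → A → ℝ≥0∞) (F : Filter A) : Prop :=
  F.NeBot ∧ (⨅ s ∈ F, ⨆ x ∈ s, ⨆ y ∈ s, d x y) = 0

/-- For a Cauchy filter `F₁` and a filter `F₂` of type 1, the presheaf distance from
`M⁻(F₁)` to `M⁻(F₂)` equals `lim⁻_{y ∈ F₂} lim⁺_{x ∈ F₁} d x y`. -/
theorem presheafDist_eq_limMinus_limPlus {A : Type*} (d : A → A → ℝ≥0∞)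
    (hrefl : ∀ x, d x x = 0)
    (htri : ∀ x y z, d x z ≤ d y z + d x y)
    (F₁ F₂ : Filter A) (hF₁ : IsCauchyFilter d F₁) (hF₂ : HasType1 d F₂) :
    (⨆ x, (Mminus d F₂ x - Mminus d F₁ x)) =
      ⨆ t ∈ F₂, ⨅ y ∈ t, ⨅ s ∈ F₁, ⨆ x ∈ s, d x y := by
  obtain ⟨hF₁ne, hF₁c⟩ := hF₁
  obtain ⟨hF₂ne, -⟩ := hF₂
  set L : A → ℝ≥0∞ := fun y => ⨅ s ∈ F₁, ⨆ x ∈ s, d x y with hL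
  have hRHS : (⨆ t ∈ F₂, ⨅ y ∈ t, ⨅ s ∈ F₁, ⨆ x ∈ s, d x y)
      = ⨆ t ∈ F₂, ⨅ y ∈ t, L y := rfl
  rw [hRHS]
  apply le_antisymm
  · refine iSup_le fun x => ?_
    rw [tsub_le_iff_right]
    refine iSup₂_le fun t ht => ?_
    rw [← tsub_le_iff_right]
    refine le_trans ?_ (le_iSup₂ (f := fun t _ => ⨅ y ∈ t, L y) t ht)
    refine le_iInf₂ fun y hy => ?_
    refine le_trans (tsub_le_tsub_right (iInf₂_le y hy) _) ?_
    rw [hL]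
    refine le_iInf₂ fun s hs => ?_
    have h1 : (⨅ z ∈ s, d x z) ≤ Mminus d F₁ x :=
      le_iSup₂ (f := fun s _ => ⨅ z ∈ s, d x z) s hs
    refine le_trans (tsub_le_tsub_left h1 _) ?_
    simp_rw [ENNReal.sub_iInf]
    exact iSup₂_le fun z hz =>
      le_iSup₂_of_le z hz (tsub_le_iff_right.mpr (htri x z y))
  · refine iSup₂_le fun t ht => ?_
    refine ENNReal.le_of_forall_pos_le_add fun ε hε hfin => ?_
    set δ : ℝ≥0∞ := (ε : ℝ≥0∞) / 2 with hδ
    have hδ0 : 0 < δ := ENNReal.half_pos (by exact_mod_cast hε.ne')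
    have h0 : (⨅ s ∈ F₁, ⨆ x ∈ s, ⨆ y ∈ s, d x y) < δ := by rw [hF₁c]; exact hδ0
    simp only [iInf_lt_iff] at h0
    obtain ⟨s, hs, hsd⟩ := h0
    obtain ⟨x, hx⟩ := Filter.nonempty_of_mem hs
    have hdiam : ∀ a ∈ s, ∀ b ∈ s, d a b ≤ δ := fun a ha b hb =>
      le_of_lt (lt_of_le_of_lt
        (le_iSup₂_of_le a ha (le_iSup₂ (f := fun b _ => d a b) b hb)) hsd)
    -- Mminus d F₁ x ≤ δ
    have hM1 : Mminus d F₁ x ≤ δ := by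
      refine iSup₂_le fun s' hs' => ?_
      obtain ⟨z, hz⟩ := Filter.nonempty_of_mem (Filter.inter_mem hs hs')
      exact le_trans (iInf₂_le z hz.2) (hdiam x hx z hz.1)
    -- L y ≤ d x y + δ for every y
    have hLle : ∀ y, L y ≤ d x y + δ := fun y => by
      refine le_trans (iInf₂_le s hs) (iSup₂_le fun x' hx' => ?_)
      exact le_trans (htri x' x y) (add_le_add_right (hdiam x' hx' x hx) _)
    -- ⨅ y ∈ t, L y ≤ Mminus d F₂ x + δ
    have hkey : (⨅ y ∈ t, L y) ≤ Mminus d F₂ x + δ := by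
      rw [← tsub_le_iff_right]
      refine le_trans (le_iInf₂ fun y hy => ?_)
        (le_iSup₂ (f := fun t _ => ⨅ y ∈ t, d x y) t ht)
      exact le_trans (tsub_le_tsub_right (iInf₂_le y hy) _)
        (tsub_le_iff_right.mpr (hLle y))
    calc (⨅ y ∈ t, L y) ≤ Mminus d F₂ x + δ := hkey
      _ ≤ (Mminus d F₂ x - Mminus d F₁ x) + Mminus d F₁ x + δ :=
          add_le_add_left le_tsub_add _
      _ ≤ (⨆ x, (Mminus d F₂ x - Mminus d F₁ x)) + δ + δ := by
          exact add_le_add (add_le_add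
            (le_iSup (fun x => Mminus d F₂ x - Mminus d F₁ x) x) hM1) le_rfl
      _ = (⨆ x, (Mminus d F₂ x - Mminus d F₁ x)) + ε := by
          rw [add_assoc, hδ, ENNReal.add_halves]
end

section
/- Let ℵ be a cardinal, A a general metric space and M a left module on A such that (i) for every index type ι with #ι < ℵ and every family (N_i) of right modules, ⨅_x (M x + ⨆_i N_i x) = ⨆_i ⨅_x (M x + N_i x), and (ii) for every v ∈ ℝ≥0∞ and every right module N, ⨅_x (M x + (N x - v)) = (⨅_x (M x + N x)) - v. Then for every ε > 0, every index type ι with #ι < ℵ, every family (x_i)_{i ∈ ι} of points of A with M (x_i) ≤ ε/2 for all i, and every α > 0, there exists y ∈ A with M y ≤ α and d (x_i) y ≤ ε for all i ∈ ι. -/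
open ENNReal Filter

universe u

/-- If `M` is a `𝒫_ℵ`-flat left module (i.e. `- * M` preserves conical `ℵ`-limits
and cotensors), then for any `ε > 0`, any family of fewer than `ℵ` points `x i` with
`M (x i) ≤ ε/2`, and any `α > 0`, there is `y` with `M y ≤ α` and `d (x i) y ≤ ε`
for all `i`. -/
theorem exists_point_of_alephFlat {A : Type u} (d : A → A → ℝ≥0∞)
    (hrefl : ∀ x, d x x = 0)
    (htri : ∀ x y z, d x z ≤ d y z + d x y)
    (c : Cardinal.{u})
    (M : A → ℝ≥0∞) (hM : ∀ x y, M x ≤ M y + d x y)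
    (hconical : ∀ (ι : Type u), Cardinal.mk ι < c → ∀ N : ι → A → ℝ≥0∞,
      (∀ i, ∀ x y, N i y ≤ d x y + N i x) →
      (⨅ x, (M x + ⨆ i, N i x)) = ⨆ i, ⨅ x, (M x + N i x))
    (hcot : ∀ (v : ℝ≥0∞) (N : A → ℝ≥0∞), (∀ x y, N y ≤ d x y + N x) →
      (⨅ x, (M x + (N x - v))) = (⨅ x, (M x + N x)) - v) :
    ∀ ε : ℝ≥0∞, 0 < ε → ∀ (ι : Type u) (x : ι → A), Cardinal.mk ι < c →
      (∀ i, M (x i) ≤ ε / 2) → ∀ α : ℝ≥0∞, 0 < α →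
        ∃ y, M y ≤ α ∧ ∀ i, d (x i) y ≤ ε := by
  intro ε hε ι x hι hx α hα
  set N : A → ℝ≥0∞ := fun y => ⨆ i, d (x i) y with hNdef
  have hNmod : ∀ u y, N y ≤ d u y + N u := by
    intro u y
    refine iSup_le fun i => le_trans (htri (x i) u y) ?_
    exact add_le_add_right (le_iSup (fun i => d (x i) u) i) _
  have hinf_i : ∀ i, (⨅ y, M y + d (x i) y) = M (x i) := by
    intro i
    apply le_antisymm
    · exact le_trans (iInf_le _ (x i)) (by simp [hrefl])
    · exact le_iInf fun y => hM (x i) y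
  have hconN : (⨅ y, M y + N y) = ⨆ i, M (x i) := by
    rw [hconical ι hι (fun i y => d (x i) y) (fun i u y => htri (x i) u y)]
    exact iSup_congr hinf_i
  have hzero : (⨅ y, M y + (N y - ε / 2)) = 0 := by
    rw [hcot (ε / 2) N hNmod, hconN]
    exact tsub_eq_zero_of_le (iSup_le hx)
  have hε2 : 0 < ε / 2 := ENNReal.div_pos hε.ne' (by norm_num)
  have hpos : (⨅ y, M y + (N y - ε / 2)) < min α (ε / 2) := by
    rw [hzero]; exact lt_min hα hε2
  obtain ⟨y, hy⟩ := iInf_lt_iff.mp hpos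
  refine ⟨y, ?_, ?_⟩
  · exact (le_self_add.trans_lt (hy.trans_le (min_le_left _ _))).le
  · intro i
    have h1 : N y - ε / 2 < ε / 2 :=
      lt_of_le_of_lt le_add_self (lt_of_lt_of_le hy (min_le_right _ _))
    have h2 : N y ≤ ε := by
      calc N y ≤ (N y - ε / 2) + ε / 2 := le_tsub_add
        _ ≤ ε / 2 + ε / 2 := add_le_add_left h1.le _
        _ = ε := ENNReal.add_halves ε
    exact le_trans (le_iSup (fun i => d (x i) y) i) h2
end

section
/- Consider the general metric space structure on ℝ≥0∞ given by d x y = y - x (truncated subtraction). Every proper filter of type 1 on this space has type ω; that is, for every proper filter F on ℝ≥0∞ with ⨅_{s ∈ F} ⨆_{x ∈ s} ⨆_{t ∈ F} ⨅_{y ∈ t} (y - x) = 0 and every ε > 0, there exists s ∈ F such that for every finite family (x_i) of elements of s and every t ∈ F, there exists y ∈ t with y - x_i ≤ ε for all i. -/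
open ENNReal Filter

/-- A proper filter `F` on a general metric space has type `ω` when for every `ε > 0`
there is `s ∈ F` such that every finite family of elements of `s` is `ε`-dominated by
some point of every `t ∈ F`. -/
def HasTypeOmega {A : Type*} (d : A → A → ℝ≥0∞) (F : Filter A) : Prop :=
  F.NeBot ∧
  ∀ ε : ℝ≥0∞, 0 < ε → ∃ s ∈ F, ∀ (n : ℕ) (x : Fin n → A),
    (∀ i, x i ∈ s) → ∀ t ∈ F, ∃ y ∈ t, ∀ i, d (x i) y ≤ ε

/-- A finite family is `ε`-dominated by `y` as soon as its minimum is. -/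
theorem hasTypeOmega_of_antitone {A : Type*} [LinearOrder A] (d : A → A → ℝ≥0∞)
    (hd : ∀ y, Antitone fun x => d x y) (F : Filter A) [F.NeBot]
    (h : ∀ ε : ℝ≥0∞, 0 < ε → ∃ s ∈ F, ∀ x ∈ s, ∀ t ∈ F, ∃ y ∈ t, d x y ≤ ε) :
    HasTypeOmega d F := by
  refine ⟨‹_›, fun ε hε => ?_⟩
  obtain ⟨s, hsF, hs⟩ := h ε hε
  refine ⟨s, hsF, fun n x hx t ht => ?_⟩
  cases isEmpty_or_nonempty (Fin n)
  · obtain ⟨y, hy⟩ := Filter.nonempty_of_mem ht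
    exact ⟨y, hy, isEmptyElim⟩
  · obtain ⟨i₀, hi₀⟩ := Finite.exists_min x
    obtain ⟨y, hyt, hy⟩ := hs (x i₀) (hx i₀) t ht
    exact ⟨y, hyt, fun i => (hd y (hi₀ i)).trans hy⟩

theorem exists_forall_mem_exists_lt_of_iInf_iSup_eq_zero {A : Type*} (d : A → A → ℝ≥0∞)
    (F : Filter A) (h1 : (⨅ s ∈ F, ⨆ x ∈ s, ⨆ t ∈ F, ⨅ y ∈ t, d x y) = 0)
    {ε : ℝ≥0∞} (hε : 0 < ε) : ∃ s ∈ F, ∀ x ∈ s, ∀ t ∈ F, ∃ y ∈ t, d x y < ε := by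
  obtain ⟨s, hsF, hs⟩ : ∃ s ∈ F, (⨆ x ∈ s, ⨆ t ∈ F, ⨅ y ∈ t, d x y) < ε := by
    rw [← h1] at hε
    simpa only [iInf_lt_iff, exists_prop] using hε
  refine ⟨s, hsF, fun x hx t ht => ?_⟩
  have hxt : (⨅ y ∈ t, d x y) < ε :=
    lt_of_le_of_lt ((le_iSup₂ (f := fun t _ => ⨅ y ∈ t, d x y) t ht).trans
      (le_iSup₂ (f := fun x _ => ⨆ t ∈ F, ⨅ y ∈ t, d x y) x hx)) hs
  simpa only [iInf_lt_iff, exists_prop] using hxt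

/-- On the general metric space `ℝ≥0∞` with `d x y = y - x` (truncated subtraction),
every proper filter of type 1 has type `ω`. -/
theorem type1_hasTypeOmega_on_ennreal (F : Filter ℝ≥0∞) (hF : F.NeBot)
    (h1 : (⨅ s ∈ F, ⨆ x ∈ s, ⨆ t ∈ F, ⨅ y ∈ t, y - x) = 0) :
    HasTypeOmega (fun x y => y - x) F := by
  refine hasTypeOmega_of_antitone _ (fun y _ _ hx => tsub_le_tsub_left hx y) F
    fun ε hε => ?_
  obtain ⟨s, hsF, hs⟩ := exists_forall_mem_exists_lt_of_iInf_iSup_eq_zero _ F h1 hε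
  exact ⟨s, hsF, fun x hx t ht => (hs x hx t ht).imp fun _ ⟨hyt, hy⟩ => ⟨hyt, hy.le⟩⟩
end

section
/- Let A be a symmetric general metric space (d x y = d y x for all x, y). Then every proper filter of type ω on A is Cauchy. -/
open ENNReal Filter

/-- On a symmetric general metric space, every proper filter of type `ω` is Cauchy. -/
theorem typeOmega_isCauchy_of_symm {A : Type*} (d : A → A → ℝ≥0∞)
    (hrefl : ∀ x, d x x = 0)
    (htri : ∀ x y z, d x z ≤ d y z + d x y)
    (hsymm : ∀ x y, d x y = d y x)
    (F : Filter A) (hF : HasTypeOmega d F) :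
    IsCauchyFilter d F := by
  obtain ⟨hne, hω⟩ := hF
  refine ⟨hne, le_antisymm ?_ zero_le⟩
  refine ENNReal.le_of_forall_pos_le_add fun ε hε _ => ?_
  simp only [zero_add]
  obtain ⟨s, hs, h⟩ := hω ((ε : ℝ≥0∞)/2)
    (ENNReal.half_pos (by exact_mod_cast hε.ne'))
  refine iInf₂_le_of_le s hs ?_
  refine iSup₂_le fun x hx => iSup₂_le fun z hz => ?_
  obtain ⟨y, hy, hd⟩ := h 2 ![x, z] (by intro i; fin_cases i <;> simpa) s hs
  have h1 := hd 0
  have h2 := hd 1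
  calc d x z ≤ d y z + d x y := htri x y z
    _ = d z y + d x y := by rw [hsymm]
    _ ≤ (ε : ℝ≥0∞)/2 + (ε : ℝ≥0∞)/2 := add_le_add h2 h1
    _ = ε := ENNReal.add_halves _
end

section
/- Let A be a symmetric general metric space (d x y = d y x for all x, y), M a left module and N a right module on A with M left adjoint to N, i.e. ⨅_{x ∈ A} (M x + N x) = 0 and d x y ≤ N y + M x for all x, y. Then M = N as functions A → ℝ≥0∞. -/
/-!
Symmetry turns the unit inequality `d z x ≤ N x + M z` into a bound on `d x z`, so the
left-module inequality gives `M x ≤ M z + d x z ≤ N x + 2 (M z + N z)` for every `z`, and the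
counit makes the error term arbitrarily small. Symmetry also makes `N` a left module and `M` a
right module with the roles of unit and counit exchanged, which gives the reverse inequality.
-/

open ENNReal

theorem ENNReal.le_of_forall_le_add_mul_of_iInf_eq_zero {ι : Sort*} {a b k : ℝ≥0∞}
    {c : ι → ℝ≥0∞} (hk : k ≠ ∞) (hc : ⨅ i, c i = 0) (h : ∀ i, a ≤ b + k * c i) : a ≤ b := by
  have : Nonempty ι := by
    refine not_isEmpty_iff.mp fun _ => top_ne_zero ?_
    rwa [iInf_of_empty] at hc
  calc a ≤ ⨅ i, b + k * c i := le_iInf h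
    _ = b + k * ⨅ i, c i := by rw [ENNReal.mul_iInf fun h => (hk h).elim, ENNReal.add_iInf]
    _ = b := by rw [hc, mul_zero, add_zero]

theorem le_of_symm_of_unit_of_counit {A : Type*} {d : A → A → ℝ≥0∞} {M N : A → ℝ≥0∞}
    (hsymm : ∀ x y, d x y = d y x) (hM : ∀ x y, M x ≤ M y + d x y)
    (hcounit : ⨅ x, (M x + N x) = 0) (hunit : ∀ x y, d x y ≤ N y + M x) (x : A) :
    M x ≤ N x :=
  ENNReal.le_of_forall_le_add_mul_of_iInf_eq_zero ofNat_ne_top hcounit fun z =>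
    calc M x ≤ M z + d z x := hsymm x z ▸ hM x z
      _ ≤ M z + (N x + M z) := by gcongr; exact hunit z x
      _ = N x + 2 * M z := by ring
      _ ≤ N x + 2 * (M z + N z) := by gcongr; exact le_self_add

theorem leftAdjoint_eq_rightAdjoint_of_symm_general {A : Type*} (d : A → A → ℝ≥0∞)
    (hsymm : ∀ x y, d x y = d y x)
    (M : A → ℝ≥0∞) (hM : ∀ x y, M x ≤ M y + d x y)
    (N : A → ℝ≥0∞) (hN : ∀ x y, N y ≤ d x y + N x)
    (hcounit : (⨅ x, (M x + N x)) = 0)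
    (hunit : ∀ x y, d x y ≤ N y + M x) :
    M = N := by
  funext x
  apply le_antisymm
  · exact le_of_symm_of_unit_of_counit hsymm hM hcounit hunit x
  · have hN' : ∀ x y, N x ≤ N y + d x y := fun x y => by
      rw [add_comm, hsymm]; exact hN y x
    have hcounit' : ⨅ x, (N x + M x) = 0 := by simpa only [add_comm] using hcounit
    have hunit' : ∀ x y, d x y ≤ M y + N x := fun x y => by
      rw [hsymm, add_comm]; exact hunit y x
    exact le_of_symm_of_unit_of_counit hsymm hN' hcounit' hunit' x

/-- On a symmetric general metric space, any left adjoint module has the same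
underlying map as its right adjoint. -/
theorem leftAdjoint_eq_rightAdjoint_of_symm {A : Type*} (d : A → A → ℝ≥0∞)
    (hrefl : ∀ x, d x x = 0)
    (htri : ∀ x y z, d x z ≤ d y z + d x y)
    (hsymm : ∀ x y, d x y = d y x)
    (M : A → ℝ≥0∞) (hM : ∀ x y, M x ≤ M y + d x y)
    (N : A → ℝ≥0∞) (hN : ∀ x y, N y ≤ d x y + N x)
    (hcounit : (⨅ x, (M x + N x)) = 0)
    (hunit : ∀ x y, d x y ≤ N y + M x) :
    M = N :=
  leftAdjoint_eq_rightAdjoint_of_symm_general d hsymm M hM N hN hcounit hunit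
end

section
/- Let A be a symmetric general metric space (d x y = d y x for all x, y). Let M, N be left modules on A admitting right adjoints M̃, Ñ respectively (M left adjoint to M̃ and N left adjoint to Ñ). If N x ≤ M x for all x ∈ A, then M = N. In particular, the pointwise order on left adjoint modules over a symmetric space is discrete. -/
open ENNReal Filter

/-- On a symmetric general metric space, the pointwise order on left adjoint modules
is discrete: if `M` and `N` are left adjoint modules and `M ⇒ N` (i.e. `N ≤ M`
pointwise), then `M = N`. -/
theorem leftAdjoint_order_discrete_of_symm {A : Type*} (d : A → A → ℝ≥0∞)
    (hrefl : ∀ x, d x x = 0)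
    (htri : ∀ x y z, d x z ≤ d y z + d x y)
    (hsymm : ∀ x y, d x y = d y x)
    (M N Mt Nt : A → ℝ≥0∞)
    (hM : ∀ x y, M x ≤ M y + d x y) (hMt : ∀ x y, Mt y ≤ d x y + Mt x)
    (hN : ∀ x y, N x ≤ N y + d x y) (hNt : ∀ x y, Nt y ≤ d x y + Nt x)
    (hMadj₁ : (⨅ x, (M x + Mt x)) = 0) (hMadj₂ : ∀ x y, d x y ≤ Mt y + M x)
    (hNadj₁ : (⨅ x, (N x + Nt x)) = 0) (hNadj₂ : ∀ x y, d x y ≤ Nt y + N x)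
    (hle : ∀ x, N x ≤ M x) :
    M = N := by
  -- On a symmetric space, the right adjoint is bounded by the left adjoint: Nt ≤ N.
  have key : ∀ y, Nt y ≤ N y := by
    intro y
    refine ENNReal.le_of_forall_pos_le_add fun ε hε _ => ?_
    have hε2 : (0 : ℝ≥0∞) < ε / 2 := by
      simp [ENNReal.div_pos_iff, hε.ne']
    have hlt : (⨅ x, (N x + Nt x)) < ε / 2 := by rw [hNadj₁]; exact hε2
    obtain ⟨z, hz⟩ := iInf_lt_iff.mp hlt
    have h1 : Nt z ≤ ε / 2 := le_trans (le_add_self) hz.le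
    calc Nt y ≤ d z y + Nt z := hNt z y
      _ = d y z + Nt z := by rw [hsymm]
      _ ≤ (Nt z + N y) + Nt z := add_le_add_left (hNadj₂ y z) _
      _ ≤ (ε / 2 + N y) + ε / 2 := add_le_add (by gcongr) h1
      _ = N y + (ε / 2 + ε / 2) := by ring
      _ = N y + ε := by rw [ENNReal.add_halves]
  funext x
  refine le_antisymm ?_ (hle x)
  refine ENNReal.le_of_forall_pos_le_add fun ε hε _ => ?_
  have hε2 : (0 : ℝ≥0∞) < ε / 2 := by
    simp [ENNReal.div_pos_iff, hε.ne']
  have hlt : (⨅ x, (M x + Mt x)) < ε / 2 := by rw [hMadj₁]; exact hε2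
  obtain ⟨w, hw⟩ := iInf_lt_iff.mp hlt
  have hw1 : M w ≤ ε / 2 := le_trans (le_self_add) hw.le
  calc M x ≤ M w + d x w := hM x w
    _ ≤ M w + (Nt w + N x) := add_le_add_right (hNadj₂ x w) _
    _ ≤ M w + (N w + N x) := add_le_add_right (add_le_add_left (key w) _) _
    _ ≤ M w + (M w + N x) := add_le_add_right (add_le_add_left (hle w) _) _
    _ ≤ ε / 2 + (ε / 2 + N x) := add_le_add hw1 (by gcongr)
    _ = N x + (ε / 2 + ε / 2) := by ring
    _ = N x + ε := by rw [ENNReal.add_halves]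
end

section
/- Let A be a general metric space, F a proper filter of type 1 on A, and M a left module on A such that there exists x₀ ∈ A with M⁻(F)(x₀) < M x₀. Then there exists a forward Cauchy sequence y : ℕ → A such that (i) ⨅_{N ∈ ℕ} ⨆_{p ≥ N} M⁻(F)(y p) = 0, and (ii) there exists x ∈ A with ⨆_{N ∈ ℕ} ⨅_{p ≥ N} d x (y p) < M x. -/
open ENNReal Filter

/-- A sequence is forward Cauchy when for every `ε > 0` there is `N` with
`d (y n) (y m) ≤ ε` for all `m ≥ n ≥ N`. -/
def ForwardCauchy {A : Type*} (d : A → A → ℝ≥0∞) (y : ℕ → A) : Prop :=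
  ∀ ε : ℝ≥0∞, 0 < ε → ∃ N : ℕ, ∀ m n : ℕ, N ≤ n → n ≤ m → d (y n) (y m) ≤ ε

/-- Given a filter `F` of type 1 on `A` and a left module `M` with
`M⁻(F) ̸⇒ M`, there is a forward Cauchy sequence `y` converging to `F`
(i.e. with `lim⁺_F M⁻(F) ∘ y = 0`) whose associated module does not dominate `M`. -/
theorem exists_forwardCauchy_seq {A : Type*} (d : A → A → ℝ≥0∞)
    (hrefl : ∀ x, d x x = 0)
    (htri : ∀ x y z, d x z ≤ d y z + d x y)
    (F : Filter A) (hF : HasType1 d F)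
    (M : A → ℝ≥0∞) (hM : ∀ x y, M x ≤ M y + d x y)
    (hlt : ∃ x₀, Mminus d F x₀ < M x₀) :
    ∃ y : ℕ → A, ForwardCauchy d y ∧
      (⨅ N : ℕ, ⨆ p ≥ N, Mminus d F (y p)) = 0 ∧
      ∃ x, (⨆ N : ℕ, ⨅ p ≥ N, d x (y p)) < M x := by
  obtain ⟨x₀, hx₀⟩ := hlt
  set c := Mminus d F x₀ with hc
  obtain ⟨r, hcr, hrM⟩ := ENNReal.lt_iff_exists_nnreal_btwn.mp hx₀
  set ε : ℝ≥0∞ := (r : ℝ≥0∞) - c with hε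
  have hctop : c ≠ ⊤ := (hcr.trans (by exact coe_lt_top)).ne
  have hεpos : 0 < ε := tsub_pos_of_lt hcr
  have hεtop : ε ≠ ⊤ := (tsub_le_self.trans_lt coe_lt_top).ne
  have hcε : c + ε = r := by
    rw [hε, add_tsub_cancel_of_le hcr.le]
  -- the scales
  set η : ℕ → ℝ≥0∞ := fun k => ε * 2⁻¹ ^ (k + 3) with hη
  have hhalf : (2⁻¹ : ℝ≥0∞) < 1 := by
    rw [ENNReal.inv_lt_one]; exact one_lt_two
  have hηpos : ∀ k, 0 < η k := fun k =>
    ENNReal.mul_pos hεpos.ne' (pow_ne_zero _ (by simp)).bot_lt.ne'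
  have hηtop : ∀ k, η k ≠ ⊤ := fun k => ENNReal.mul_ne_top hεtop (by
    exact (pow_lt_top (lt_of_lt_of_le hhalf le_top)).ne)
  have hηanti : ∀ {n m : ℕ}, n ≤ m → η m ≤ η n := by
    intro n m h
    exact mul_le_mul_right (pow_le_pow_right_of_le_one' hhalf.le (by omega)) ε
  have hηtend : Tendsto η atTop (nhds 0) := by
    have h1 : Tendsto (fun k : ℕ => (2⁻¹ : ℝ≥0∞) ^ (k + 3)) atTop (nhds 0) :=
      (ENNReal.tendsto_pow_atTop_nhds_zero_of_lt_one hhalf).comp (tendsto_add_atTop_nat 3)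
    simpa using ENNReal.Tendsto.const_mul h1 (Or.inr hεtop)
  have hηsucc : ∀ k, 4 * η (k + 1) = 2 * η k := by
    intro k
    have h2 : (2 : ℝ≥0∞) * 2⁻¹ = 1 := ENNReal.mul_inv_cancel two_ne_zero (by simp)
    rw [hη]
    show 4 * (ε * 2⁻¹ ^ (k + 1 + 3)) = 2 * (ε * 2⁻¹ ^ (k + 3))
    have : (k + 1 + 3) = (k + 3) + 1 := by omega
    rw [this, pow_succ]
    calc 4 * (ε * (2⁻¹ ^ (k + 3) * 2⁻¹))
        = (2 * (2 * 2⁻¹)) * (ε * 2⁻¹ ^ (k + 3)) := by ring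
      _ = 2 * (ε * 2⁻¹ ^ (k + 3)) := by rw [h2, mul_one]
  -- choose the sets
  have hsel : ∀ k : ℕ, ∃ s, s ∈ F ∧ (⨆ x ∈ s, Mminus d F x) < η k := by
    intro k
    have h0 : (⨅ s ∈ F, ⨆ x ∈ s, Mminus d F x) < η k := by
      rw [hF.2]; exact hηpos k
    simpa only [iInf_lt_iff, exists_prop] using h0
  choose s hsF hssup using hsel
  -- choose y₀
  have hy0ex : ∃ z, z ∈ s 0 ∧ d x₀ z < c + η 0 := by
    have h1 : (⨅ y ∈ s 0, d x₀ y) ≤ c := le_iSup₂ (f := fun t (_ : t ∈ F) => ⨅ y ∈ t, d x₀ y) (s 0) (hsF 0)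
    have h2 : (⨅ y ∈ s 0, d x₀ y) < c + η 0 :=
      h1.trans_lt (lt_add_right hctop (hηpos 0).ne')
    simpa only [iInf_lt_iff, exists_prop] using h2
  obtain ⟨y₀, hy₀s, hy₀d⟩ := hy0ex
  -- the inductive step
  have hstep : ∀ k, ∀ z, z ∈ s k → ∃ w, w ∈ s (k + 1) ∧ d z w < 2 * η k := by
    intro k z hz
    have h1 : Mminus d F z < η k :=
      (le_iSup₂ (f := fun x (_ : x ∈ s k) => Mminus d F x) z hz).trans_lt (hssup k)
    have h2 : (⨅ y ∈ s (k + 1), d z y) ≤ Mminus d F z :=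
      le_iSup₂ (f := fun t (_ : t ∈ F) => ⨅ y ∈ t, d z y) (s (k + 1)) (hsF (k + 1))
    have h3 : (⨅ y ∈ s (k + 1), d z y) < 2 * η k := by
      refine (h2.trans_lt h1).trans_le ?_
      calc η k = 1 * η k := (one_mul _).symm
        _ ≤ 2 * η k := mul_le_mul_left one_le_two _
    simpa only [iInf_lt_iff, exists_prop] using h3
  choose g hg1 hg2 using hstep
  -- the sequence
  let Y : ∀ k : ℕ, {z : A // z ∈ s k} := fun k =>
    Nat.rec ⟨y₀, hy₀s⟩ (fun k p => ⟨g k p.1 p.2, hg1 k p.1 p.2⟩) k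
  set y : ℕ → A := fun k => (Y k).1 with hy
  have hymem : ∀ k, y k ∈ s k := fun k => (Y k).2
  have hstepd : ∀ k, d (y k) (y (k + 1)) < 2 * η k := fun k => hg2 k (Y k).1 (Y k).2
  -- the key invariant
  have key : ∀ n m, n ≤ m → d (y n) (y m) + 4 * η m ≤ 4 * η n := by
    intro n m h
    induction m, h using Nat.le_induction with
    | base => rw [hrefl, zero_add]
    | succ m hnm ih =>
      calc d (y n) (y (m + 1)) + 4 * η (m + 1)
          ≤ (d (y m) (y (m + 1)) + d (y n) (y m)) + 4 * η (m + 1) :=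
            add_le_add_left (htri _ _ _) _
        _ ≤ (2 * η m + d (y n) (y m)) + 2 * η m := by
            rw [hηsucc m]; exact add_le_add_left (add_le_add_left (hstepd m).le _) _
        _ = d (y n) (y m) + 4 * η m := by ring
        _ ≤ 4 * η n := ih
  have hdist : ∀ n m, n ≤ m → d (y n) (y m) ≤ 4 * η n := fun n m h =>
    le_trans (le_add_right le_rfl) (key n m h)
  refine ⟨y, ?_, ?_, ?_⟩
  · -- forward Cauchy
    intro ε₀ hε₀
    have h4 : Tendsto (fun n => 4 * η n) atTop (nhds 0) := by
      simpa using ENNReal.Tendsto.const_mul hηtend (Or.inr (by norm_num))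
    obtain ⟨N, hN⟩ := (h4.eventually_lt_const hε₀).exists_forall_of_atTop
    exact ⟨N, fun m n hNn hnm =>
      (hdist n m hnm).trans ((mul_le_mul_right (hηanti hNn) 4).trans (hN N le_rfl).le)⟩
  · -- the liminf condition
    have hb : ∀ N, (⨆ p ≥ N, Mminus d F (y p)) ≤ η N := by
      intro N
      refine iSup₂_le fun p hp => ?_
      exact ((le_iSup₂ (f := fun x (_ : x ∈ s p) => Mminus d F x) (y p) (hymem p)).trans
        (hssup p).le).trans (hηanti hp)
    refine le_antisymm ?_ zero_le
    refine ENNReal.le_of_forall_pos_le_add fun δ hδ _ => ?_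
    obtain ⟨N, hN⟩ := (hηtend.eventually_lt_const (show (0:ℝ≥0∞) < δ from ENNReal.coe_pos.mpr hδ)).exists
    rw [zero_add]
    exact (iInf_le _ N).trans ((hb N).trans hN.le)
  · -- x₀ works
    refine ⟨x₀, ?_⟩
    have hbound : ∀ p, d x₀ (y p) ≤ c + ε := by
      intro p
      have h1 : d x₀ (y p) ≤ d (y 0) (y p) + d x₀ (y 0) := htri _ _ _
      have h0 : y 0 = y₀ := rfl
      have h2 : d (y 0) (y p) ≤ 4 * η 0 := hdist 0 p (Nat.zero_le p)
      have h3 : d x₀ (y 0) ≤ c + η 0 := by rw [h0]; exact hy₀d.le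
      have h5 : 4 * η 0 + (c + η 0) = c + 5 * η 0 := by ring
      have h6 : 5 * η 0 ≤ ε := by
        rw [hη]
        show 5 * (ε * 2⁻¹ ^ (0 + 3)) ≤ ε
        have h7 : (5 : ℝ≥0∞) * 2⁻¹ ^ (0 + 3) ≤ 1 := by
          rw [pow_succ, pow_succ, pow_one]
          calc (5:ℝ≥0∞) * (2⁻¹ * 2⁻¹ * 2⁻¹) ≤ 8 * (2⁻¹ * 2⁻¹ * 2⁻¹) := by
                exact mul_le_mul_left (by norm_num) _
            _ = (2*2⁻¹) * (2*2⁻¹) * (2*2⁻¹) := by ring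
            _ = 1 := by rw [ENNReal.mul_inv_cancel two_ne_zero (by simp)]; ring
        calc 5 * (ε * 2⁻¹ ^ (0 + 3)) = ε * (5 * 2⁻¹ ^ (0 + 3)) := by ring
          _ ≤ ε * 1 := mul_le_mul_right h7 ε
          _ = ε := mul_one ε
      calc d x₀ (y p) ≤ 4 * η 0 + (c + η 0) := h1.trans (add_le_add h2 h3)
        _ = c + 5 * η 0 := h5
        _ ≤ c + ε := add_le_add_right h6 c
    have : (⨆ N : ℕ, ⨅ p ≥ N, d x₀ (y p)) ≤ c + ε := by
      refine iSup_le fun N => ?_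
      exact (iInf₂_le N le_rfl).trans (hbound N)
    exact this.trans_lt (by rw [hcε]; exact hrM)
end

section
/- Let A be a general metric space, ι a nonempty type, and (M_i)_{i ∈ ι} a family of P1-flat left modules on A. Then the pointwise infimum M : A → ℝ≥0∞, M x = ⨅_{i ∈ ι} M_i x, is again a P1-flat left module on A. -/
open ENNReal Filter

lemma iInf_tsub_const {ι : Type*} [Nonempty ι] (g : ι → ℝ≥0∞) (v : ℝ≥0∞) :
    (⨅ i, (g i - v)) = (⨅ i, g i) - v := by
  refine le_antisymm ?_ (le_iInf fun i => tsub_le_tsub_right (iInf_le g i) v)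
  rcases eq_or_ne v ⊤ with rfl | hv
  · simp [ENNReal.sub_top]
  refine ENNReal.le_of_forall_pos_le_add fun ε hε hlt => ?_
  have hfin : (⨅ i, g i) ≠ ⊤ := by
    intro h
    rw [h, ENNReal.top_sub hv] at hlt
    exact (lt_irrefl _ hlt)
  obtain ⟨i, hi⟩ := iInf_lt_iff.mp (ENNReal.lt_add_right hfin (ENNReal.coe_ne_zero.mpr hε.ne'))
  calc (⨅ j, (g j - v)) ≤ g i - v := iInf_le _ i
    _ ≤ (⨅ j, g j) + ε - v := tsub_le_tsub_right hi.le v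
    _ ≤ (⨅ j, g j) - v + ε := by
        rw [tsub_le_iff_right]
        calc (⨅ j, g j) + (ε : ℝ≥0∞) ≤ ((⨅ j, g j) - v + v) + ε :=
              add_le_add_left le_tsub_add (ε:ℝ≥0∞)
          _ = (⨅ j, g j) - v + ε + v := by ring

/-- The pointwise infimum of a nonempty family of `𝒫₁`-flat left modules is again a
`𝒫₁`-flat left module. -/
theorem iInf_p1Flat {A : Type*} (d : A → A → ℝ≥0∞)
    (hrefl : ∀ x, d x x = 0)
    (htri : ∀ x y z, d x z ≤ d y z + d x y)
    (ι : Type*) [Nonempty ι] (M : ι → A → ℝ≥0∞)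
    (hmod : ∀ i, ∀ x y, M i x ≤ M i y + d x y)
    (hflat : ∀ i, IsP1Flat d (M i)) :
    (∀ x y, (⨅ i, M i x) ≤ (⨅ i, M i y) + d x y) ∧
    IsP1Flat d (fun x => ⨅ i, M i x) := by
  have key : ∀ c : A → ℝ≥0∞, (⨅ x, ((⨅ i, M i x) + c x)) = ⨅ i, ⨅ x, (M i x + c x) := by
    intro c
    simp only [ENNReal.iInf_add]
    exact iInf_comm
  refine ⟨fun x y => ?_, ?_, ?_⟩
  · rw [ENNReal.iInf_add]
    exact le_iInf fun i => le_trans (iInf_le (fun j => M j x) i) (hmod i x y)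
  · obtain ⟨i⟩ := ‹Nonempty ι›
    refine le_antisymm ?_ (zero_le)
    calc (⨅ x, ⨅ j, M j x) ≤ ⨅ x, M i x := iInf_mono fun x => iInf_le _ i
      _ = 0 := (hflat i).1
  · intro v N hN
    show (⨅ x, ((⨅ i, M i x) + (N x - v))) = (⨅ x, ((⨅ i, M i x) + N x)) - v
    rw [key (fun x => N x - v), key N]
    have h2 : ∀ i, (⨅ x, (M i x + (N x - v))) = (⨅ x, (M i x + N x)) - v :=
      fun i => (hflat i).2 v N hN
    simp only [h2]
    exact iInf_tsub_const _ v
end
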